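/- Let A be a commutative unital *-algebra over ℂ and q a C*-seminorm on A. Let Â_q be the set of q-bounded characters of A, i.e. characters χ with |χ(a)| ≤ q(a) for all a ∈ A, equipped with the topology of pointwise convergence. Then Â_q is a compact topological space, and for every a ∈ A one has q(a) = sup{|χ(a)| : χ ∈ Â_q}, the supremum over the empty set being 0. (Equivalently, the Hausdorff completion of A with respect to q is *-isomorphic to the C*-algebra C(Â_q).) -/

import Mathlib

/-- A character of a unital `⋆`-algebra over `ℂ`: a unital, multiplicative, `ℂ`-linear,
`⋆`-preserving functional. -/
def IsCharacter (A : Type*) [Ring A] [Algebra ℂ A] [StarRing A] [StarModule ℂ A]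
    (χ : A → ℂ) : Prop :=
  χ 1 = 1 ∧ (∀ a b : A, χ (a * b) = χ a * χ b) ∧ (∀ a b : A, χ (a + b) = χ a + χ b) ∧
    (∀ (c : ℂ) (a : A), χ (c • a) = c * χ a) ∧ (∀ a : A, χ (star a) = starRingEnd ℂ (χ a))

set_option maxHeartbeats 1000000 in
open UniformSpace WeakDual in
/-- Let `A` be a commutative unital `⋆`-algebra and `q` a C*-seminorm on `A`.  The set `Â_q` of
`q`-bounded characters is compact in the topology of pointwise convergence (the product
topology on `A → ℂ`), and `q a = sup {|χ a| : χ ∈ Â_q}` for every `a`, the supremum of the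
empty set being `0`. -/
theorem qBounded_characters_compact_and_norm_eq_sup
    (A : Type*) [CommRing A] [Algebra ℂ A] [StarRing A] [StarModule ℂ A]
    (q : A → ℝ) (hq_nonneg : ∀ a : A, 0 ≤ q a)
    (hq_smul : ∀ (c : ℂ) (a : A), q (c • a) = ‖c‖ * q a)
    (hq_add : ∀ a b : A, q (a + b) ≤ q a + q b)
    (hq_mul : ∀ a b : A, q (a * b) ≤ q a * q b)
    (hq_cstar : ∀ a : A, q (star a * a) = q a ^ 2) :
    IsCompact {χ : A → ℂ | IsCharacter A χ ∧ ∀ a : A, ‖χ a‖ ≤ q a} ∧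
    ∀ a : A, q a =
      sSup ((fun χ : A → ℂ => ‖χ a‖) ''
        {χ : A → ℂ | IsCharacter A χ ∧ ∀ b : A, ‖χ b‖ ≤ q b}) := by
  set K : Set (A → ℂ) := {χ : A → ℂ | IsCharacter A χ ∧ ∀ b : A, ‖χ b‖ ≤ q b} with hK
  -- Part 1 : compactness
  have hKcompact : IsCompact K := by
    have hsub : K ⊆ Set.pi Set.univ (fun a => Metric.closedBall (0 : ℂ) (q a)) := by
      rintro χ ⟨-, hb⟩ a -
      simpa [Metric.mem_closedBall, dist_zero_right] using hb a
    have hcomp : IsCompact (Set.pi Set.univ fun a => Metric.closedBall (0 : ℂ) (q a)) :=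
      isCompact_univ_pi fun a => isCompact_closedBall 0 (q a)
    refine hcomp.of_isClosed_subset ?_ hsub
    have hKeq : K = {χ : A → ℂ | χ 1 = 1} ∩
        (⋂ (a : A) (b : A), {χ : A → ℂ | χ (a * b) = χ a * χ b}) ∩
        (⋂ (a : A) (b : A), {χ : A → ℂ | χ (a + b) = χ a + χ b}) ∩
        (⋂ (c : ℂ) (a : A), {χ : A → ℂ | χ (c • a) = c * χ a}) ∩
        (⋂ (a : A), {χ : A → ℂ | χ (star a) = starRingEnd ℂ (χ a)}) ∩
        (⋂ (a : A), {χ : A → ℂ | ‖χ a‖ ≤ q a}) := by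
      ext χ
      simp only [hK, IsCharacter, Set.mem_setOf_eq, Set.mem_inter_iff, Set.mem_iInter]
      tauto
    rw [hKeq]
    refine (((((isClosed_eq (continuous_apply 1) continuous_const).inter ?_).inter ?_).inter
      ?_).inter ?_).inter ?_
    · exact isClosed_iInter fun a => isClosed_iInter fun b =>
        isClosed_eq (continuous_apply _) ((continuous_apply a).mul (continuous_apply b))
    · exact isClosed_iInter fun a => isClosed_iInter fun b =>
        isClosed_eq (continuous_apply _) ((continuous_apply a).add (continuous_apply b))
    · exact isClosed_iInter fun c => isClosed_iInter fun a =>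
        isClosed_eq (continuous_apply _) (continuous_const.mul (continuous_apply a))
    · exact isClosed_iInter fun a =>
        isClosed_eq (continuous_apply _) (Complex.continuous_conj.comp (continuous_apply a))
    · exact isClosed_iInter fun a =>
        isClosed_le ((continuous_apply a).norm) continuous_const
  refine ⟨hKcompact, ?_⟩
  -- basic facts about `q`
  have hq0 : q 0 = 0 := by simpa using hq_smul 0 0
  have hqneg : ∀ a : A, q (-a) = q a := fun a => by simpa using hq_smul (-1) a
  have hqstar_le : ∀ a : A, q a ≤ q (star a) := by
    intro a
    rcases (hq_nonneg a).eq_or_lt with h | h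
    · rw [← h]; exact hq_nonneg _
    · have h1 : q a ^ 2 ≤ q (star a) * q a := (hq_cstar a) ▸ hq_mul (star a) a
      nlinarith
  have hqstar : ∀ a : A, q (star a) = q a := fun a =>
    le_antisymm (by simpa using hqstar_le (star a)) (hqstar_le a)
  -- the trivial case `q = 0`
  have hq1sq : q 1 = q 1 ^ 2 := by simpa using hq_cstar 1
  by_cases hq1 : q 1 = 0
  · -- then q ≡ 0 and there are no bounded characters
    have hq_zero : ∀ a : A, q a = 0 := fun a =>
      le_antisymm (by calc q a = q (a * 1) := by rw [mul_one]
                    _ ≤ q a * q 1 := hq_mul a 1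
                    _ = 0 := by rw [hq1, mul_zero]) (hq_nonneg a)
    have hKempty : K = ∅ := by
      rw [Set.eq_empty_iff_forall_notMem]
      rintro χ ⟨hχ, hb⟩
      have := hb 1
      rw [hχ.1, hq_zero 1] at this
      norm_num at this
    intro a
    rw [hKempty]
    simp [hq_zero a, Real.sSup_empty]
  have hq1' : q 1 = 1 := by
    have h0 : q 1 * (q 1 - 1) = 0 := by nlinarith [hq1sq]
    rcases mul_eq_zero.mp h0 with h | h
    · exact absurd h hq1
    · linarith
  -- install seminormed structure on `A`
  letI : SeminormedCommRing A :=
    { AddGroupSeminorm.toSeminormedAddCommGroup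
        { toFun := q, map_zero' := hq0, add_le' := hq_add, neg' := hqneg },
      ‹CommRing A› with
      norm_mul_le := hq_mul
      mul_comm := mul_comm }
  have hnorm : ∀ a : A, ‖a‖ = q a := fun _ => rfl
  letI : NormedAlgebra ℂ A :=
    { ‹Algebra ℂ A› with norm_smul_le := fun c a => (hq_smul c a).le }
  -- the completion `C`
  set C := Completion A with hC
  have hstar_uc : UniformContinuous (star : A → A) := by
    refine Isometry.uniformContinuous (Isometry.of_dist_eq fun a b => ?_)
    rw [dist_eq_norm, dist_eq_norm, ← star_sub, hnorm, hnorm, hqstar]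
  letI : Star C := ⟨Completion.map star⟩
  haveI : ContinuousStar C := ⟨Completion.continuous_map⟩
  have hstar_coe : ∀ a : A, star ((a : C)) = ((star a : A) : C) := fun a =>
    Completion.map_coe hstar_uc a
  letI : StarRing C :=
    { ‹Star C› with
      star_involutive := fun x => Completion.induction_on x
        (isClosed_eq (continuous_star.comp continuous_star) continuous_id)
        (fun a => by rw [hstar_coe, hstar_coe, star_star])
      star_mul := fun x y => Completion.induction_on₂ x y
        (isClosed_eq (continuous_star.comp (continuous_fst.mul continuous_snd))
          ((continuous_star.comp continuous_snd).mul (continuous_star.comp continuous_fst)))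
        (fun a b => by
          rw [← Completion.coe_mul, hstar_coe, hstar_coe, hstar_coe, ← Completion.coe_mul,
            star_mul])
      star_add := fun x y => Completion.induction_on₂ x y
        (isClosed_eq (continuous_star.comp (continuous_fst.add continuous_snd))
          ((continuous_star.comp continuous_fst).add (continuous_star.comp continuous_snd)))
        (fun a b => by
          rw [← Completion.coe_add, hstar_coe, hstar_coe, hstar_coe, ← Completion.coe_add,
            star_add]) }
  letI : StarModule ℂ C :=
    ⟨fun c x => Completion.induction_on x
      (isClosed_eq (continuous_star.comp (continuous_const_smul c))
        ((continuous_const_smul (star c)).comp continuous_star))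
      (fun a => by
        rw [← Completion.coe_smul, hstar_coe, hstar_coe, ← Completion.coe_smul, star_smul])⟩
  letI : CStarRing C :=
    ⟨fun x => Completion.induction_on x
      (isClosed_le (continuous_norm.mul continuous_norm)
        ((continuous_star.mul continuous_id).norm))
      (fun a => by
        rw [hstar_coe, ← Completion.coe_mul, Completion.norm_coe, Completion.norm_coe,
          hnorm, hnorm, hq_cstar, sq])⟩
  letI : CommCStarAlgebra C := {}
  haveI : NormOneClass C := ⟨by rw [← Completion.coe_one, Completion.norm_coe, hnorm]; exact hq1'⟩
  haveI : Nontrivial C := ⟨1, 0, fun h => by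
    have h1 : ‖(1 : C)‖ = 1 := norm_one
    rw [h, norm_zero] at h1
    exact zero_ne_one h1⟩
  -- every character of `C` restricts to a bounded character of `A`
  have hrestrict : ∀ φ : characterSpace ℂ C, (fun b : A => φ ((b : A) : C)) ∈ K := by
    intro φ
    refine ⟨⟨?_, ?_, ?_, ?_, ?_⟩, ?_⟩
    · show φ (((1 : A) : C)) = 1
      rw [Completion.coe_one]; exact map_one φ
    · intro a b; show φ (((a * b : A) : C)) = φ ((a : A) : C) * φ ((b : A) : C)
      rw [Completion.coe_mul, map_mul]
    · intro a b; show φ (((a + b : A) : C)) = φ ((a : A) : C) + φ ((b : A) : C)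
      rw [Completion.coe_add, map_add]
    · intro c a; show φ (((c • a : A) : C)) = c * φ ((a : A) : C)
      rw [Completion.coe_smul, map_smul, smul_eq_mul]
    · intro a; show φ (((star a : A) : C)) = starRingEnd ℂ (φ ((a : A) : C))
      rw [← hstar_coe, map_star, starRingEnd_apply]
    · intro b
      show ‖φ ((b : A) : C)‖ ≤ q b
      calc ‖φ ((b : A) : C)‖ ≤ ‖((b : A) : C)‖ := AlgHom.norm_apply_le_self φ _
        _ = q b := by rw [Completion.norm_coe, hnorm]
  intro a
  have hbdd : BddAbove ((fun χ : A → ℂ => ‖χ a‖) '' K) := by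
    refine ⟨q a, ?_⟩
    rintro - ⟨χ, hχ, rfl⟩
    exact hχ.2 a
  have key : q a = ⨆ φ : characterSpace ℂ C, ‖φ ((a : A) : C)‖ := by
    calc q a = ‖((a : A) : C)‖ := by rw [Completion.norm_coe, hnorm]
      _ = ‖gelfandTransform ℂ C ((a : A) : C)‖ :=
        (Isometry.norm_map_of_map_zero (gelfandTransform_isometry C) (map_zero _) _).symm
      _ = ⨆ φ : characterSpace ℂ C, ‖gelfandTransform ℂ C ((a : A) : C) φ‖ :=
        ContinuousMap.norm_eq_iSup_norm _
      _ = ⨆ φ : characterSpace ℂ C, ‖φ ((a : A) : C)‖ := by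
        simp only [gelfandTransform_apply_apply]
  refine le_antisymm ?_ ?_
  · rw [key]
    refine ciSup_le fun φ => ?_
    exact le_csSup hbdd ⟨_, hrestrict φ, rfl⟩
  · refine Real.sSup_le ?_ (hq_nonneg a)
    rintro - ⟨χ, hχ, rfl⟩
    exact hχ.2 a
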